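/- Let b : ℝ → ℝ³ be continuous and suppose b(t) × (∫_{t₀}^t b(τ) dτ) = 0 for all t > t₀. Then U(t) := exp(-i ((∫_{t₀}^t b(τ)dτ)·σ)) satisfies the Schrödinger equation i·U'(t) = (b(t)·σ)·U(t) with U(t₀) = I. -/

import Mathlib

open Matrix Complex

noncomputable section

def σ1 : Matrix (Fin 2) (Fin 2) ℂ := !![0, 1; 1, 0]
def σ2 : Matrix (Fin 2) (Fin 2) ℂ := !![0, -Complex.I; Complex.I, 0]
def σ3 : Matrix (Fin 2) (Fin 2) ℂ := !![1, 0; 0, -1]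

/-- r·σ = r₁σ₁ + r₂σ₂ + r₃σ₃ for a real vector r. -/
def dotSigma (r : Fin 3 → ℝ) : Matrix (Fin 2) (Fin 2) ℂ :=
  (r 0 : ℂ) • σ1 + (r 1 : ℂ) • σ2 + (r 2 : ℂ) • σ3

/-- Euclidean norm of a vector in ℝ³. -/
def enorm3 (r : Fin 3 → ℝ) : ℝ := Real.sqrt (r 0 ^ 2 + r 1 ^ 2 + r 2 ^ 2)

lemma expDeriv_of_commute {𝔸 : Type*} [NormedRing 𝔸] [NormedAlgebra ℝ 𝔸] [CompleteSpace 𝔸]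
    {f : ℝ → 𝔸} {f' : 𝔸} {t : ℝ} (hf : HasDerivAt f f' t) (hc : Commute f' (f t)) :
    HasDerivAt (fun s => NormedSpace.exp (f s)) (f' * NormedSpace.exp (f t)) t := by
  open NormedSpace in
  obtain ⟨p, hp⟩ := analyticAt_exp_of_mem_ball (𝕂 := ℝ) (f t)
    (by rw [expSeries_radius_eq_top]; exact edist_lt_top _ _)
  have hd : HasFDerivAt NormedSpace.exp (fderiv ℝ NormedSpace.exp (f t)) (f t) :=
    hp.differentiableAt.hasFDerivAt
  have hline : HasDerivAt (fun ε : ℝ => f t + ε • f') f' 0 := by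
    simpa using ((hasDerivAt_id (0:ℝ)).smul_const f').const_add (f t)
  have h1 : HasDerivAt (fun ε : ℝ => NormedSpace.exp (f t + ε • f'))
      (fderiv ℝ NormedSpace.exp (f t) f') 0 := by
    have hd' : HasFDerivAt NormedSpace.exp (fderiv ℝ NormedSpace.exp (f t)) (f t + (0:ℝ) • f') := by
      simpa using hd
    exact hd'.comp_hasDerivAt 0 hline
  have h2 : HasDerivAt (fun ε : ℝ => NormedSpace.exp (f t + ε • f')) (NormedSpace.exp (f t) * f') 0 := by
    have key : ∀ ε : ℝ, NormedSpace.exp (f t + ε • f') = NormedSpace.exp (f t) * NormedSpace.exp (ε • f') := fun ε =>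
      NormedSpace.exp_add_of_commute_of_mem_ball (𝕂 := ℝ) (hc.symm.smul_right ε)
        (by rw [NormedSpace.expSeries_radius_eq_top]; exact edist_lt_top _ _)
        (by rw [NormedSpace.expSeries_radius_eq_top]; exact edist_lt_top _ _)
    have h3 := (hasDerivAt_exp_smul_const (𝕂 := ℝ) f' (0:ℝ)).const_mul (NormedSpace.exp (f t))
    simp only [zero_smul, NormedSpace.exp_zero, one_mul] at h3
    exact h3.congr_of_eventuallyEq (Filter.Eventually.of_forall key)
  have hL : fderiv ℝ NormedSpace.exp (f t) f' = NormedSpace.exp (f t) * f' := h1.unique h2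
  have hmain := hd.comp_hasDerivAt t hf
  rw [hL] at hmain
  have : NormedSpace.exp (f t) * f' = f' * NormedSpace.exp (f t) := (hc.exp_right).symm.eq
  rwa [this] at hmain

lemma dotSigma_eq (r : Fin 3 → ℝ) :
    dotSigma r = !![(r 2 : ℂ), (r 0 : ℂ) - (r 1 : ℂ) * Complex.I;
                    (r 0 : ℂ) + (r 1 : ℂ) * Complex.I, -(r 2 : ℂ)] := by
  ext i j
  fin_cases i <;> fin_cases j <;>
    simp [dotSigma, σ1, σ2, σ3] <;> ring

lemma dotSigma_comm {a c : Fin 3 → ℝ} (h : crossProduct a c = 0) :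
    Commute (dotSigma a) (dotSigma c) := by
  have h0 : (a 1 : ℂ) * c 2 - a 2 * c 1 = 0 := by
    have := congrFun h 0; rw [cross_apply] at this
    have : a 1 * c 2 - a 2 * c 1 = 0 := by simpa using this
    exact_mod_cast this
  have h1 : (a 2 : ℂ) * c 0 - a 0 * c 2 = 0 := by
    have := congrFun h 1; rw [cross_apply] at this
    have : a 2 * c 0 - a 0 * c 2 = 0 := by simpa using this
    exact_mod_cast this
  have h2 : (a 0 : ℂ) * c 1 - a 1 * c 0 = 0 := by
    have := congrFun h 2; rw [cross_apply] at this
    have : a 0 * c 1 - a 1 * c 0 = 0 := by simpa using this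
    exact_mod_cast this
  show dotSigma a * dotSigma c = dotSigma c * dotSigma a
  rw [dotSigma_eq, dotSigma_eq]
  ext i j
  fin_cases i <;> fin_cases j <;>
    simp [Matrix.mul_apply, Fin.sum_univ_succ] <;>
    first
      | linear_combination 2 * Complex.I * h2
      | linear_combination 2 * Complex.I * h0 + 2 * h1
      | linear_combination 2 * Complex.I * h0 - 2 * h1
      | linear_combination (-2) * Complex.I * h2

theorem qubit_exp_solution
    (b : ℝ → Fin 3 → ℝ) (hb : Continuous fun t => b t) (t₀ : ℝ)
    (hcomm : ∀ t, t₀ < t →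
      crossProduct (b t) (fun k => ∫ τ in t₀..t, b τ k) = 0) :
    let U : ℝ → Matrix (Fin 2) (Fin 2) ℂ := fun t =>
      NormedSpace.exp (-(Complex.I • dotSigma fun k => ∫ τ in t₀..t, b τ k))
    U t₀ = 1 ∧
    ∀ t, t₀ < t → ∀ i j, HasDerivAt (fun s => U s i j)
      ((-Complex.I • (dotSigma (b t) * U t)) i j) t := by
  intro U
  constructor
  · show NormedSpace.exp (-(Complex.I • dotSigma fun k => ∫ τ in t₀..t₀, b τ k)) = 1
    have : (fun k : Fin 3 => ∫ τ in t₀..t₀, b τ k) = fun _ => (0:ℝ) :=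
      funext fun k => intervalIntegral.integral_same
    rw [this]
    simp [dotSigma, NormedSpace.exp_zero]
  · intro t ht i j
    letI : NormedRing (Matrix (Fin 2) (Fin 2) ℂ) := Matrix.linftyOpNormedRing
    letI : NormedAlgebra ℝ (Matrix (Fin 2) (Fin 2) ℂ) := Matrix.linftyOpNormedAlgebra
    letI : NormedAlgebra ℂ (Matrix (Fin 2) (Fin 2) ℂ) := Matrix.linftyOpNormedAlgebra
    have hcont : ∀ k, Continuous fun τ => b τ k := fun k => (continuous_apply k).comp hb
    have hderiv : ∀ k : Fin 3, HasDerivAt (fun s => ∫ τ in t₀..s, b τ k) (b t k) t := fun k =>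
      intervalIntegral.integral_hasDerivAt_right ((hcont k).intervalIntegrable t₀ t)
        ((hcont k).stronglyMeasurableAtFilter _ _) (hcont k).continuousAt
    set A := dotSigma (b t) with hA
    have hterm : ∀ (k : Fin 3) (M : Matrix (Fin 2) (Fin 2) ℂ),
        HasDerivAt (fun s => ((∫ τ in t₀..s, b τ k : ℝ) : ℂ) • M) ((b t k : ℂ) • M) t :=
      fun k M => ((hderiv k).ofReal_comp).smul_const M
    have hF : HasDerivAt (fun s => dotSigma fun k => ∫ τ in t₀..s, b τ k) A t := by
      have := ((hterm 0 σ1).add (hterm 1 σ2)).add (hterm 2 σ3)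
      exact this
    have hf : HasDerivAt (fun s => -(Complex.I • dotSigma fun k => ∫ τ in t₀..s, b τ k))
        (-(Complex.I • A)) t := (hF.const_smul Complex.I).neg
    have hc : Commute (-(Complex.I • A))
        (-(Complex.I • dotSigma fun k => ∫ τ in t₀..t, b τ k)) := by
      have := dotSigma_comm (hcomm t ht)
      exact (((this.smul_left Complex.I).smul_right Complex.I).neg_left).neg_right
    have hU := expDeriv_of_commute hf hc
    have hexp : (NormedSpace.exp : Matrix (Fin 2) (Fin 2) ℂ → _) = NormedSpace.exp :=
      rfl
    -- project to the (i,j) entry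
    let E : Matrix (Fin 2) (Fin 2) ℂ →ₗ[ℂ] ℂ :=
      { toFun := fun M => M i j
        map_add' := fun _ _ => rfl
        map_smul' := fun _ _ => rfl }
    let Ec : Matrix (Fin 2) (Fin 2) ℂ →L[ℂ] ℂ := LinearMap.toContinuousLinearMap E
    have hres := (Ec.restrictScalars ℝ).hasFDerivAt.comp_hasDerivAt t hU
    have hfinal : HasDerivAt (fun s => U s i j)
        ((-(Complex.I • A) * U t) i j) t := hres
    convert hfinal using 1
    show (-Complex.I • (A * U t)) i j = (-(Complex.I • A) * U t) i j
    rw [neg_smul, Matrix.neg_mul, Matrix.smul_mul]
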